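/- arXiv:1306.0406 — 2 statements merged into one kernel-verified Lean document; each statement's English description precedes it below -/
import Mathlib

section
/- Let x₁ ≤ x₂ ≤ ... ≤ xₙ be strings in non-decreasing lexicographic order. Then for all indices p < q, lcp(x_p, x_q) = min { lcp(x_k, x_{k+1}) : p ≤ k < q }. -/
/-- Length of the longest common prefix of two strings (lists). -/
def lcp {α : Type*} [DecidableEq α] : List α → List α → ℕ
  | a :: x, b :: y => if a = b then lcp x y + 1 else 0
  | _, _ => 0

/-- Non-strict lexicographic order on strings. -/
def lexLe {α : Type*} [LT α] (x y : List α) : Prop :=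
  List.Lex (· < ·) x y ∨ x = y

lemma lexLe_trans {α : Type*} [LinearOrder α] {x y z : List α}
    (h1 : lexLe x y) (h2 : lexLe y z) : lexLe x z := by
  rcases h1 with h1 | rfl
  · rcases h2 with h2 | rfl
    · exact Or.inl (List.lex_trans lt_trans h1 h2)
    · exact Or.inl h1
  · exact h2

lemma lexLe_head {α : Type*} [LinearOrder α] {a b : α} {x y : List α}
    (h : lexLe (a :: x) (b :: y)) : a ≤ b := by
  rcases h with h | h
  · cases h with
    | cons _ => exact le_refl _
    | rel h => exact le_of_lt h
  · simp_all

lemma lexLe_tail {α : Type*} [LinearOrder α] {a : α} {x y : List α}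
    (h : lexLe (a :: x) (a :: y)) : lexLe x y := by
  rcases h with h | h
  · cases h with
    | cons h => exact Or.inl h
    | rel h => exact absurd h (lt_irrefl a)
  · injection h with _ h; exact Or.inr h

lemma lcp_min {α : Type*} [LinearOrder α] :
    ∀ (x y z : List α), lexLe x y → lexLe y z →
      lcp x z = min (lcp x y) (lcp y z)
  | [], y, z, _, _ => by simp [lcp]
  | a :: x, [], z, h1, _ => by
      rcases h1 with h1 | h1
      · cases h1
      · simp at h1
  | a :: x, b :: y, [], _, h2 => by
      rcases h2 with h2 | h2
      · cases h2
      · simp at h2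
  | a :: x, b :: y, c :: z, h1, h2 => by
      have hab := lexLe_head h1
      have hbc := lexLe_head h2
      by_cases hac : a = c
      · have hb : a = b := le_antisymm hab (hac ▸ hbc)
        subst hb
        have hc : a = c := hac
        subst hc
        have := lcp_min x y z (lexLe_tail h1) (lexLe_tail h2)
        simp [lcp, this]
      · by_cases hab' : a = b
        · subst hab'
          have : a ≠ c := hac
          simp [lcp, this]
        · simp [lcp, hab', Nat.zero_min, hac]

theorem lexLe_chain {α : Type*} [LinearOrder α] (x : ℕ → List α)
    (hsorted : ∀ k, lexLe (x k) (x (k + 1))) :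
    ∀ p q, p ≤ q → lexLe (x p) (x q) := by
  intro p q h
  induction q, h using Nat.le_induction with
  | base => exact Or.inr rfl
  | succ n hn ih => exact lexLe_trans ih (hsorted n)

lemma inf'_congr_set {β : Type*} [SemilatticeInf β] {s t : Finset ℕ}
    (hs : s.Nonempty) (ht : t.Nonempty) (f : ℕ → β) (h : s = t) :
    s.inf' hs f = t.inf' ht f := by subst h; rfl

/-- For strings in non-decreasing lexicographic order,

`lcp(x_p, x_q) = min { lcp(x_k, x_{k+1}) : p ≤ k < q }`. -/
theorem lcp_eq_min_adjacent {α : Type*} [LinearOrder α] (x : ℕ → List α)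
    (hsorted : ∀ k, lexLe (x k) (x (k + 1))) :
    ∀ p q (hpq : p < q),
      lcp (x p) (x q) =
        (Finset.Ico p q).inf' (Finset.nonempty_Ico.mpr hpq)
          (fun k => lcp (x k) (x (k + 1))) := by
  intro p q hpq
  induction q, hpq using Nat.le_induction with
  | base =>
      rw [inf'_congr_set _ (Finset.singleton_nonempty p) _ (Nat.Ico_succ_singleton p),
        Finset.inf'_singleton]
  | succ n hn ih =>
      have hins : Finset.Ico p (n + 1) = insert n (Finset.Ico p n) := by
        ext m; simp [Finset.mem_Ico, Finset.mem_insert]; omega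
      have hne : (insert n (Finset.Ico p n)).Nonempty := Finset.insert_nonempty _ _
      rw [inf'_congr_set _ hne _ hins, Finset.inf'_insert, ← ih]
      rw [lcp_min (x p) (x n) (x (n+1)) (lexLe_chain x hsorted p n (Nat.le_of_succ_le hn)) (hsorted n)]
      simp [min_comm]
      exact Finset.nonempty_Ico.mpr hn
end

section
/- In a Cartesian tree built on a sequence e₁,...,e_m (the root stores the minimum of the sequence, with its left and right subtrees being Cartesian trees of the prefix before and the suffix after the minimum, respectively), for any indices i ≤ j, the element stored at the lowest common ancestor of the nodes for positions i and j equals min{e_i, e_{i+1}, ..., e_j}. -/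
/-- Binary trees with values at internal nodes. -/
inductive CTree (α : Type*) where
  | nil : CTree α
  | node : CTree α → α → CTree α → CTree α

namespace CTree

/-- Number of nodes of a tree. -/
def size {α : Type*} : CTree α → ℕ
  | nil => 0
  | node l _ r => l.size + 1 + r.size

/-- Build the Cartesian tree of a list (with fuel for termination): the root
stores the (leftmost) minimum of the sequence, its left and right subtrees being
the Cartesian trees of the prefix before and of the suffix after that minimum. -/
def cartAux {α : Type*} [LinearOrder α] : ℕ → List α → CTree α
  | 0, _ => nil
  | _ + 1, [] => nil
  | n + 1, a :: t =>
    let l := a :: t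
    let m := l.foldr min a
    let i := l.idxOf m
    node (cartAux n (l.take i)) m (cartAux n (l.drop (i + 1)))

/-- The Cartesian tree of a list. -/
def cart {α : Type*} [LinearOrder α] (l : List α) : CTree α :=
  cartAux l.length l

/-- The value stored at the lowest common ancestor of the nodes corresponding to
(0-based) positions i ≤ j of the underlying sequence: descend while both
positions are on the same side of the root. -/
def lcaVal {α : Type*} [Inhabited α] : CTree α → ℕ → ℕ → α
  | nil, _, _ => default
  | node l v r, i, j =>
    if j < l.size then lcaVal l i j
    else if l.size < i then lcaVal r (i - l.size - 1) (j - l.size - 1)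
    else v

end CTree

namespace CTree

private lemma foldr_min_aux {α : Type*} [LinearOrder α] (a : α) :
    ∀ t : List α, t.foldr min a ∈ a :: t ∧ ∀ x ∈ a :: t, t.foldr min a ≤ x := by
  intro t
  induction t with
  | nil => simp
  | cons b t ih =>
    obtain ⟨hmem, hle⟩ := ih
    constructor
    · rcases min_le_left b (t.foldr min a) |>.lt_or_eq with h | h
      · have : min b (t.foldr min a) = t.foldr min a := by
          rcases min_choice b (t.foldr min a) with h' | h' <;> simp_all
        rw [List.foldr_cons, this]
        rcases List.mem_cons.1 hmem with h | h
        · rw [h]; exact List.mem_cons_self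
        · exact List.mem_cons_of_mem _ (List.mem_cons_of_mem _ h)
      · rw [List.foldr_cons, h]
        exact List.mem_cons_of_mem _ (List.mem_cons_self)
    · intro x hx
      rcases List.mem_cons.1 hx with rfl | hx
      · exact min_le_of_right_le (hle _ (by simp))
      · rcases List.mem_cons.1 hx with rfl | hx
        · exact min_le_left _ _
        · exact min_le_of_right_le (hle _ (by simp [hx]))

private lemma cons_foldr_min {α : Type*} [LinearOrder α] (a : α) (t : List α) :
    (a :: t).foldr min a = t.foldr min a := by
  rw [List.foldr_cons]
  exact min_eq_right ((foldr_min_aux a t).2 a (List.mem_cons_self))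

private lemma foldr_min_mem {α : Type*} [LinearOrder α] (a : α) (t : List α) :
    (a :: t).foldr min a ∈ a :: t := by
  rw [cons_foldr_min]; exact (foldr_min_aux a t).1

private lemma foldr_min_le {α : Type*} [LinearOrder α] (a : α) (t : List α) :
    ∀ x ∈ a :: t, (a :: t).foldr min a ≤ x := by
  rw [cons_foldr_min]; exact (foldr_min_aux a t).2

private lemma size_cartAux {α : Type*} [LinearOrder α] :
    ∀ (n : ℕ) (l : List α), l.length ≤ n → (cartAux n l).size = l.length := by
  intro n
  induction n with
  | zero =>
    intro l hl
    have : l.length = 0 := by omega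
    simp [cartAux, size, this]
  | succ n ih =>
    intro l hl
    match l with
    | [] => simp [cartAux, size]
    | a :: t =>
      set l : List α := a :: t with hl'
      set m : α := l.foldr min a with hm
      set i₀ : ℕ := l.idxOf m with hi₀
      have hmem : m ∈ l := foldr_min_mem a t
      have hi₀lt : i₀ < l.length := List.idxOf_lt_length_iff.2 hmem
      have h1 : (l.take i₀).length = i₀ := by rw [List.length_take]; omega
      have h2 : (l.drop (i₀ + 1)).length = l.length - i₀ - 1 := by rw [List.length_drop]; omega
      show (node (cartAux n (l.take i₀)) m (cartAux n (l.drop (i₀ + 1)))).size = l.length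
      rw [size, ih _ (by rw [List.length_take]; omega), ih _ (by rw [List.length_drop]; omega), h1, h2]
      omega

private lemma main_cartAux {α : Type*} [LinearOrder α] [Inhabited α] :
    ∀ (n : ℕ) (l : List α), l.length ≤ n → ∀ i j, i ≤ j → j < l.length →
      ((l.drop i).take (j + 1 - i)).minimum = ((cartAux n l).lcaVal i j : α) := by
  intro n
  induction n with
  | zero => intro l hl i j hij hj; omega
  | succ n ih =>
    intro l hl i j hij hj
    match l with
    | [] => simp at hj
    | a :: t =>
      set l : List α := a :: t with hl'
      set m : α := l.foldr min a with hm
      set i₀ : ℕ := l.idxOf m with hi₀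
      have hmem : m ∈ l := foldr_min_mem a t
      have hle : ∀ x ∈ l, m ≤ x := foldr_min_le a t
      have hi₀lt : i₀ < l.length := List.idxOf_lt_length_iff.2 hmem
      have hget : l[i₀]'hi₀lt = m := List.getElem_idxOf hi₀lt
      have h1 : (l.take i₀).length = i₀ := by rw [List.length_take]; omega
      have h2 : (l.drop (i₀ + 1)).length = l.length - i₀ - 1 := by rw [List.length_drop]; omega
      have hsize : (cartAux n (l.take i₀)).size = i₀ := by
        rw [size_cartAux n _ (by omega), h1]
      show ((l.drop i).take (j + 1 - i)).minimum =
        ((node (cartAux n (l.take i₀)) m (cartAux n (l.drop (i₀ + 1)))).lcaVal i j : α)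
      rw [lcaVal, hsize]
      by_cases hj' : j < i₀
      · rw [if_pos hj']
        have := ih (l.take i₀) (by rw [h1]; omega) i j hij (by rw [h1]; omega)
        rw [← this, List.drop_take, List.take_take,
          min_eq_left (by omega : j + 1 - i ≤ i₀ - i)]
      · rw [if_neg hj']
        by_cases hi' : i₀ < i
        · rw [if_pos hi']
          have := ih (l.drop (i₀ + 1)) (by rw [List.length_drop]; omega) (i - i₀ - 1) (j - i₀ - 1)
            (by omega) (by rw [h2]; omega)
          rw [← this, List.drop_drop]
          have e1 : i₀ + 1 + (i - i₀ - 1) = i := by omega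
          have e2 : j - i₀ - 1 + 1 - (i - i₀ - 1) = j + 1 - i := by omega
          rw [e1, e2]
        · rw [if_neg hi']
          have hii : i ≤ i₀ := by omega
          have hji : i₀ ≤ j := by omega
          rw [List.minimum_eq_coe_iff]
          constructor
          · have hlen : i₀ - i < ((l.drop i).take (j + 1 - i)).length := by
              simp; omega
            have : ((l.drop i).take (j + 1 - i))[i₀ - i]'hlen = m := by
              have e3 : i + (i₀ - i) = i₀ := by omega
              simp only [List.getElem_take, List.getElem_drop, e3]
              exact hget
            rw [← this]
            exact List.getElem_mem _
          · intro x hx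
            exact hle x (List.mem_of_mem_drop (List.mem_of_mem_take hx))

end CTree

/-- In a Cartesian tree built on a sequence e₀,...,e_{m-1}, for any positions
i ≤ j < m, the element stored at the lowest common ancestor of the nodes for
positions i and j equals min{e_i, ..., e_j}. -/
theorem cartesian_lca_eq_range_min {α : Type*} [LinearOrder α] [Inhabited α]
    (e : List α) (i j : ℕ) (hij : i ≤ j) (hj : j < e.length) :
    ((e.drop i).take (j + 1 - i)).minimum =
      ((CTree.cart e).lcaVal i j : α) := by
  exact CTree.main_cartAux e.length e le_rfl i j hij hj
end
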